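/- Let q ≥ 2, let n, m ≥ 1, let D ⊆ {1,…,n} and D_1 ⊆ {1,…,m} be nonempty. The subgraph of G(Z_q^n, D) induced on the connected component of the zero vector is isomorphic (as a graph) to the subgraph of G(Z_q^m, D_1) induced on the connected component of the zero vector if and only if D = D_1. -/

import Mathlib

/-- The Rosenbloom–Tsfasman weight of a vector in `Z_q^n`:
the largest (1-based) index `i` with `x i ≠ 0`, and `0` for the zero vector. -/
def rtWeight {q n : ℕ} (x : Fin n → ZMod q) : ℕ :=
  (Finset.univ.filter fun i => x i ≠ 0).sup fun i => i.val + 1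

/-- The Rosenbloom–Tsfasman distance on `Z_q^n`: `ρ(x,y) = ω(x - y)`. -/
def rtDist {q n : ℕ} (x y : Fin n → ZMod q) : ℕ := rtWeight (x - y)

/-- The distance graph `G(Z_q^n, D)`: distinct `x, y` are adjacent iff `ρ(x,y) ∈ D`. -/
def rtGraph (q n : ℕ) (D : Finset ℕ) : SimpleGraph (Fin n → ZMod q) :=
  SimpleGraph.fromRel fun x y => rtDist x y ∈ D

/-! ### Basic lemmas about `rtWeight` -/

lemma rtWeight_le_iff {q n d : ℕ} {y : Fin n → ZMod q} :
    rtWeight y ≤ d ↔ ∀ i : Fin n, d ≤ i.val → y i = 0 := by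
  unfold rtWeight
  rw [Finset.sup_le_iff]
  simp only [Finset.mem_filter, Finset.mem_univ, true_and]
  constructor
  · intro h i hi
    by_contra h0
    have := h i h0; omega
  · intro h i hi
    by_contra h'
    exact hi (h i (by omega))

lemma le_rtWeight {q n : ℕ} {y : Fin n → ZMod q} {i : Fin n} (h : y i ≠ 0) :
    i.val + 1 ≤ rtWeight y := by
  exact Finset.le_sup (f := fun i : Fin n => i.val + 1)
    (Finset.mem_filter.mpr ⟨Finset.mem_univ _, h⟩)

lemma rtWeight_le_card {q n : ℕ} (y : Fin n → ZMod q) : rtWeight y ≤ n := by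
  unfold rtWeight
  rw [Finset.sup_le_iff]
  intro i _; omega

lemma rtWeight_zero {q n : ℕ} : rtWeight (0 : Fin n → ZMod q) = 0 := by
  unfold rtWeight
  simp

lemma rtWeight_neg {q n : ℕ} (y : Fin n → ZMod q) : rtWeight (-y) = rtWeight y := by
  unfold rtWeight
  congr 1
  ext i
  simp [neg_eq_zero]

lemma rtDist_comm {q n : ℕ} (x y : Fin n → ZMod q) : rtDist x y = rtDist y x := by
  unfold rtDist
  rw [← rtWeight_neg (y - x), neg_sub]

lemma rtGraph_adj {q n : ℕ} {D : Finset ℕ} {x y : Fin n → ZMod q} :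
    (rtGraph q n D).Adj x y ↔ x ≠ y ∧ rtDist x y ∈ D := by
  simp only [rtGraph, SimpleGraph.fromRel_adj, rtDist_comm y x, or_self]

lemma rtWeight_add_le {q n : ℕ} (a b : Fin n → ZMod q) :
    rtWeight (a + b) ≤ max (rtWeight a) (rtWeight b) := by
  rw [rtWeight_le_iff]
  intro i hi
  have ha := rtWeight_le_iff.mp (le_refl (rtWeight a)) i (le_trans (le_max_left _ _) hi)
  have hb := rtWeight_le_iff.mp (le_refl (rtWeight b)) i (le_trans (le_max_right _ _) hi)
  simp [Pi.add_apply, ha, hb]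

/-! ### The extension map -/

def extFun {q : ℕ} {k n : ℕ} (h : k ≤ n) (z : Fin k → ZMod q) : Fin n → ZMod q :=
  fun i => if h' : i.val < k then z ⟨i.val, h'⟩ else 0

lemma rtWeight_extFun {q k n : ℕ} (h : k ≤ n) (z : Fin k → ZMod q) :
    rtWeight (extFun h z) = rtWeight z := by
  unfold rtWeight
  apply le_antisymm
  · rw [Finset.sup_le_iff]
    intro i hi
    simp only [Finset.mem_filter, Finset.mem_univ, true_and] at hi
    simp only [extFun] at hi
    by_cases h' : i.val < k
    · rw [dif_pos h'] at hi
      exact Finset.le_sup (f := fun i : Fin k => i.val + 1) (b := ⟨i.val, h'⟩)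
        (by simpa using hi)
    · rw [dif_neg h'] at hi; exact absurd rfl hi
  · rw [Finset.sup_le_iff]
    intro j hj
    simp only [Finset.mem_filter, Finset.mem_univ, true_and] at hj
    have hjn : j.val < n := lt_of_lt_of_le j.2 h
    have : extFun h z ⟨j.val, hjn⟩ ≠ 0 := by
      simp only [extFun, dif_pos j.2]
      convert hj using 2
    exact Finset.le_sup (f := fun i : Fin n => i.val + 1) (b := ⟨j.val, hjn⟩)
      (by simpa using this)

lemma extFun_sub {q k n : ℕ} (h : k ≤ n) (a b : Fin k → ZMod q) :
    extFun h (a - b) = extFun h a - extFun h b := by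
  funext i
  by_cases h' : i.val < k <;> simp [extFun, h']

lemma extFun_injective {q k n : ℕ} (h : k ≤ n) :
    Function.Injective (extFun (q := q) h) := by
  intro a b hab
  funext j
  have := congrFun hab ⟨j.val, lt_of_lt_of_le j.2 h⟩
  simpa [extFun, j.2] using this

lemma extFun_restrict {q k n : ℕ} (h : k ≤ n) (y : Fin n → ZMod q) (hy : rtWeight y ≤ k) :
    extFun h (fun j : Fin k => y ⟨j.val, lt_of_lt_of_le j.2 h⟩) = y := by
  funext i
  by_cases h' : i.val < k
  · simp [extFun, h']
  · simp only [extFun, dif_neg h']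
    exact (rtWeight_le_iff.mp hy i (by omega)).symm

/-! ### Counting -/

lemma geom_sum_nat {q : ℕ} (hq : 1 ≤ q) (N : ℕ) :
    ∑ d ∈ Finset.range N, (q - 1) * q ^ d = q ^ N - 1 := by
  induction N with
  | zero => simp
  | succ N ih =>
    rw [Finset.sum_range_succ, ih]
    have h1 : 1 ≤ q ^ N := Nat.one_le_pow _ _ (by omega)
    have h2 : q ^ (N + 1) = q ^ N * q := pow_succ q N
    have h3 : (q - 1) * q ^ N = q * q ^ N - q ^ N := by
      rw [Nat.sub_mul, one_mul]
    have h4 : q * q ^ N = q ^ N * q := Nat.mul_comm _ _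
    have h5 : q ^ N ≤ q ^ N * q := Nat.le_mul_of_pos_right _ (by omega)
    omega

lemma digits_sum_inj {q : ℕ} (hq : 2 ≤ q) :
    ∀ N (E F : Finset ℕ), E ⊆ Finset.range N → F ⊆ Finset.range N →
      (∑ d ∈ E, (q - 1) * q ^ d) = (∑ d ∈ F, (q - 1) * q ^ d) → E = F := by
  intro N
  induction N with
  | zero =>
    intro E F hE hF _
    simp only [Finset.range_zero, Finset.subset_empty] at hE hF
    rw [hE, hF]
  | succ N ih =>
    intro E F hE hF hsum
    have key : ∀ G : Finset ℕ, G ⊆ Finset.range N → (∑ d ∈ G, (q-1)*q^d) ≤ q ^ N - 1 := by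
      intro G hG
      calc (∑ d ∈ G, (q-1)*q^d) ≤ ∑ d ∈ Finset.range N, (q-1)*q^d :=
            Finset.sum_le_sum_of_subset hG
        _ = q ^ N - 1 := geom_sum_nat (by omega) N
    have hbig : (q - 1) * q ^ N > q ^ N - 1 := by
      have h1 : 1 ≤ q ^ N := Nat.one_le_pow _ _ (by omega)
      have : q ^ N ≤ (q - 1) * q ^ N := Nat.le_mul_of_pos_left _ (by omega)
      omega
    have hsubE : E.erase N ⊆ Finset.range N := by
      intro a ha
      have h1 := Finset.mem_of_mem_erase ha
      have h2 := Finset.ne_of_mem_erase ha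
      have := hE h1
      simp only [Finset.mem_range] at this ⊢
      omega
    have hsubF : F.erase N ⊆ Finset.range N := by
      intro a ha
      have h1 := Finset.mem_of_mem_erase ha
      have h2 := Finset.ne_of_mem_erase ha
      have := hF h1
      simp only [Finset.mem_range] at this ⊢
      omega
    by_cases hNE : N ∈ E <;> by_cases hNF : N ∈ F
    · have e1 : ∑ d ∈ E, (q-1)*q^d = (q-1)*q^N + ∑ d ∈ E.erase N, (q-1)*q^d :=
        (Finset.add_sum_erase _ _ hNE).symm
      have e2 : ∑ d ∈ F, (q-1)*q^d = (q-1)*q^N + ∑ d ∈ F.erase N, (q-1)*q^d :=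
        (Finset.add_sum_erase _ _ hNF).symm
      have := ih (E.erase N) (F.erase N) hsubE hsubF (by omega)
      ext a
      by_cases ha : a = N
      · subst ha; simp [hNE, hNF]
      · constructor
        · intro h; exact Finset.mem_of_mem_erase (this ▸ Finset.mem_erase_of_ne_of_mem ha h)
        · intro h; exact Finset.mem_of_mem_erase (this ▸ Finset.mem_erase_of_ne_of_mem ha h)
    · exfalso
      have hFsub : F ⊆ Finset.range N := by
        intro a ha
        have := hF ha
        simp only [Finset.mem_range] at this ⊢
        rcases Nat.lt_succ_iff_lt_or_eq.mp this with h | h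
        · exact h
        · exact absurd (h ▸ ha) hNF
      have h1 : (q-1)*q^N ≤ ∑ d ∈ E, (q-1)*q^d :=
        Finset.single_le_sum (f := fun d => (q-1)*q^d) (fun i _ => Nat.zero_le _) hNE
      have h2 := key F hFsub
      omega
    · exfalso
      have hEsub : E ⊆ Finset.range N := by
        intro a ha
        have := hE ha
        simp only [Finset.mem_range] at this ⊢
        rcases Nat.lt_succ_iff_lt_or_eq.mp this with h | h
        · exact h
        · exact absurd (h ▸ ha) hNE
      have h1 : (q-1)*q^N ≤ ∑ d ∈ F, (q-1)*q^d :=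
        Finset.single_le_sum (f := fun d => (q-1)*q^d) (fun i _ => Nat.zero_le _) hNF
      have h2 := key E hEsub
      omega
    · have hEsub : E ⊆ Finset.range N := by
        intro a ha
        have := hE ha
        simp only [Finset.mem_range] at this ⊢
        rcases Nat.lt_succ_iff_lt_or_eq.mp this with h | h
        · exact h
        · exact absurd (h ▸ ha) hNE
      have hFsub : F ⊆ Finset.range N := by
        intro a ha
        have := hF ha
        simp only [Finset.mem_range] at this ⊢
        rcases Nat.lt_succ_iff_lt_or_eq.mp this with h | h
        · exact h
        · exact absurd (h ▸ ha) hNF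
      exact ih E F hEsub hFsub hsum

noncomputable def weightLeEquiv {q k n : ℕ} (h : k ≤ n) :
    (Fin k → ZMod q) ≃ {y : Fin n → ZMod q // rtWeight y ≤ k} :=
  Equiv.ofBijective
    (fun z => ⟨extFun h z, by
      rw [rtWeight_extFun]; exact rtWeight_le_card z⟩)
    ⟨fun a b hab => extFun_injective h (congrArg Subtype.val hab),
     fun ⟨y, hy⟩ => ⟨fun j => y ⟨j.val, lt_of_lt_of_le j.2 h⟩,
       Subtype.ext (extFun_restrict h y hy)⟩⟩

lemma card_weight_le {q n : ℕ} [NeZero q] (d : ℕ) (hd : d ≤ n) :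
    (Finset.univ.filter fun y : Fin n → ZMod q => rtWeight y ≤ d).card = q ^ d := by
  rw [← Fintype.card_subtype, ← Fintype.card_congr (weightLeEquiv hd),
    Fintype.card_fun, Fintype.card_fin, ZMod.card]

lemma card_weight_eq {q n : ℕ} [NeZero q] (d : ℕ) (hd1 : 1 ≤ d) (hd : d ≤ n) :
    (Finset.univ.filter fun y : Fin n → ZMod q => rtWeight y = d).card
      = q ^ d - q ^ (d - 1) := by
  have hsub : (Finset.univ.filter fun y : Fin n → ZMod q => rtWeight y ≤ d - 1)
      ⊆ Finset.univ.filter fun y => rtWeight y ≤ d := by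
    intro y hy
    simp only [Finset.mem_filter, Finset.mem_univ, true_and] at hy ⊢
    omega
  have heq : (Finset.univ.filter fun y : Fin n → ZMod q => rtWeight y = d)
      = (Finset.univ.filter fun y => rtWeight y ≤ d)
        \ (Finset.univ.filter fun y => rtWeight y ≤ d - 1) := by
    ext y
    simp only [Finset.mem_filter, Finset.mem_univ, true_and, Finset.mem_sdiff]
    omega
  rw [heq, Finset.card_sdiff_of_subset hsub, card_weight_le d hd,
    card_weight_le (d-1) (by omega)]

lemma card_weight_mem {q n : ℕ} [NeZero q] (D : Finset ℕ) (hD : D ⊆ Finset.Icc 1 n) :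
    (Finset.univ.filter fun y : Fin n → ZMod q => rtWeight y ∈ D).card
      = ∑ d ∈ D, (q ^ d - q ^ (d - 1)) := by
  have hpart : (Finset.univ.filter fun y : Fin n → ZMod q => rtWeight y ∈ D)
      = D.biUnion fun d => Finset.univ.filter fun y => rtWeight y = d := by
    ext y
    simp only [Finset.mem_filter, Finset.mem_univ, true_and, Finset.mem_biUnion]
    constructor
    · intro h; exact ⟨_, h, rfl⟩
    · rintro ⟨d, hd, rfl⟩; exact hd
  rw [hpart, Finset.card_biUnion]
  · apply Finset.sum_congr rfl
    intro d hd
    have := hD hd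
    simp only [Finset.mem_Icc] at this
    exact card_weight_eq d this.1 this.2
  · intro a _ b _ hab
    simp only [Finset.disjoint_left, Finset.mem_filter, Finset.mem_univ, true_and]
    intro y hy hy'
    exact hab (hy ▸ hy')

/-! ### The component of zero -/

lemma reachable_iff {q n : ℕ} (hq : 2 ≤ q) {D : Finset ℕ}
    (hD : D ⊆ Finset.Icc 1 n) (hDne : D.Nonempty) (y : Fin n → ZMod q) :
    (rtGraph q n D).Reachable 0 y ↔ rtWeight y ≤ D.max' hDne := by
  haveI : Fact (1 < q) := ⟨by omega⟩
  set k := D.max' hDne with hk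
  have hkD : k ∈ D := D.max'_mem hDne
  have hkIcc := hD hkD
  simp only [Finset.mem_Icc] at hkIcc
  obtain ⟨hk1, hkn⟩ := hkIcc
  constructor
  · intro h
    obtain ⟨w⟩ := h
    have aux : ∀ (x z : Fin n → ZMod q), (rtGraph q n D).Walk x z →
        rtWeight x ≤ k → rtWeight z ≤ k := by
      intro x z w
      induction w with
      | nil => exact id
      | @cons a b c hab _ ih =>
        intro hxa
        apply ih
        have hdist : rtDist a b ∈ D := (rtGraph_adj.mp hab).2
        have hdk : rtWeight (b - a) ≤ k := by
          have h1 : rtWeight (a - b) ≤ k := by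
            have := hD hdist
            simp only [Finset.mem_Icc] at this
            exact le_trans (D.le_max' _ hdist) (le_refl k)
          rw [← rtWeight_neg (a - b), neg_sub] at h1
          exact h1
        have : b = a + (b - a) := by abel
        rw [this]
        exact le_trans (rtWeight_add_le a (b - a)) (max_le hxa hdk)
    exact aux 0 y w (by rw [rtWeight_zero]; omega)
  · intro hy
    by_cases hy0 : y = 0
    · subst hy0; exact SimpleGraph.Reachable.refl 0
    have hkm1 : k - 1 < n := by omega
    set e : Fin n → ZMod q := fun i => if i.val = k - 1 then 1 else 0 with he
    have hek : e ⟨k - 1, hkm1⟩ = 1 := by simp [he]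
    have hene : e ⟨k - 1, hkm1⟩ ≠ 0 := by rw [hek]; exact one_ne_zero
    have hwe : rtWeight e = k := by
      apply le_antisymm
      · rw [rtWeight_le_iff]
        intro i hi
        simp only [he]
        rw [if_neg (by omega)]
      · have := le_rtWeight hene
        simpa using (by omega : k ≤ (k-1) + 1) |>.trans this
    by_cases hyk : rtWeight y = k
    · apply SimpleGraph.Adj.reachable
      rw [rtGraph_adj]
      refine ⟨fun h => hy0 h.symm, ?_⟩
      have : rtDist 0 y = rtWeight y := by
        unfold rtDist
        rw [zero_sub, rtWeight_neg]
      rw [this, hyk]; exact hkD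
    · have hylt : rtWeight y ≤ k - 1 := by
        have := hy; omega
      have adj1 : (rtGraph q n D).Adj 0 e := by
        rw [rtGraph_adj]
        constructor
        · intro h
          exact hene (by rw [← h]; rfl)
        · have : rtDist 0 e = rtWeight e := by
            unfold rtDist; rw [zero_sub, rtWeight_neg]
          rw [this, hwe]; exact hkD
      have hyk1 : y ⟨k - 1, hkm1⟩ = 0 := rtWeight_le_iff.mp hylt _ (by simp)
      have hsub : (e - y) ⟨k - 1, hkm1⟩ ≠ 0 := by
        simp [Pi.sub_apply, hek, hyk1]
      have adj2 : (rtGraph q n D).Adj e y := by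
        rw [rtGraph_adj]
        constructor
        · intro h
          apply hsub
          rw [h]; simp
        · have hge : k ≤ rtWeight (e - y) := by
            have := le_rtWeight hsub
            simpa using (by omega : k ≤ (k-1) + 1) |>.trans this
          have hle : rtWeight (e - y) ≤ k := by
            have : e - y = e + (-y) := by abel
            rw [this]
            refine le_trans (rtWeight_add_le e (-y)) (max_le (le_of_eq hwe) ?_)
            rw [rtWeight_neg]; omega
          have : rtDist e y = k := le_antisymm hle hge
          rw [this]; exact hkD
      exact adj1.reachable.trans adj2.reachable

noncomputable def compEquiv {q n : ℕ} (hq : 2 ≤ q) {D : Finset ℕ}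
    (hD : D ⊆ Finset.Icc 1 n) (hDne : D.Nonempty) (hkn : D.max' hDne ≤ n) :
    {y : Fin n → ZMod q // (rtGraph q n D).Reachable 0 y} ≃ (Fin (D.max' hDne) → ZMod q) where
  toFun x := fun j => x.val ⟨j.val, lt_of_lt_of_le j.2 hkn⟩
  invFun z := ⟨extFun hkn z, (reachable_iff hq hD hDne _).mpr
    (by rw [rtWeight_extFun]; exact rtWeight_le_card z)⟩
  left_inv x := Subtype.ext (extFun_restrict hkn x.val ((reachable_iff hq hD hDne _).mp x.2))
  right_inv z := by
    funext j
    simp [extFun, j.2]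

noncomputable def compIso {q n : ℕ} (hq : 2 ≤ q) {D : Finset ℕ}
    (hD : D ⊆ Finset.Icc 1 n) (hDne : D.Nonempty) (hkn : D.max' hDne ≤ n) :
    ((rtGraph q n D).induce {y | (rtGraph q n D).Reachable 0 y}) ≃g
      rtGraph q (D.max' hDne) D where
  toEquiv := compEquiv hq hD hDne hkn
  map_rel_iff' := by
    intro a b
    have ha : rtWeight a.val ≤ D.max' hDne := (reachable_iff hq hD hDne a.val).mp a.2
    have hb : rtWeight b.val ≤ D.max' hDne := (reachable_iff hq hD hDne b.val).mp b.2
    set fa : Fin (D.max' hDne) → ZMod q := fun j => a.val ⟨j.val, lt_of_lt_of_le j.2 hkn⟩ with hfa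
    set fb : Fin (D.max' hDne) → ZMod q := fun j => b.val ⟨j.val, lt_of_lt_of_le j.2 hkn⟩ with hfb
    have hea : extFun hkn fa = a.val := extFun_restrict hkn a.val ha
    have heb : extFun hkn fb = b.val := extFun_restrict hkn b.val hb
    have hdist : rtDist fa fb = rtDist a.val b.val := by
      unfold rtDist
      rw [← rtWeight_extFun hkn, extFun_sub, hea, heb]
    have hne : fa ≠ fb ↔ a ≠ b := by
      constructor
      · intro h hab
        exact h (by rw [hfa, hfb, hab])
      · intro h h'
        apply h
        apply Subtype.ext
        rw [← hea, ← heb, h']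
    show (rtGraph q (D.max' hDne) D).Adj fa fb ↔ ((rtGraph q n D).comap _).Adj a b
    rw [SimpleGraph.comap_adj, rtGraph_adj, rtGraph_adj, hdist, hne]
    simp [Function.Embedding.coe_subtype, ne_eq, Subtype.coe_inj]

/-! ### Neighbor set equivalences -/

def neighborEquivOfReachable {V : Type*} (G : SimpleGraph V) (v : V)
    (w : {y | G.Reachable v y}) :
    ((G.induce {y | G.Reachable v y}).neighborSet w) ≃ G.neighborSet ↑w where
  toFun x := ⟨(x.val : V), x.2⟩
  invFun y := ⟨⟨y.val, w.2.trans y.2.reachable⟩, y.2⟩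
  left_inv x := rfl
  right_inv y := rfl

def translateEquiv (q n : ℕ) (D : Finset ℕ) (w : Fin n → ZMod q) :
    (rtGraph q n D).neighborSet w ≃ (rtGraph q n D).neighborSet 0 where
  toFun y := ⟨y.val - w, by
    have h := (rtGraph_adj.mp y.2)
    rw [SimpleGraph.mem_neighborSet, rtGraph_adj]
    constructor
    · intro h0
      exact h.1 (by rw [eq_comm, sub_eq_zero] at h0; exact h0.symm)
    · have : (0 : Fin n → ZMod q) - (y.val - w) = w - y.val := by abel
      unfold rtDist
      rw [this]
      exact h.2⟩
  invFun z := ⟨z.val + w, by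
    have h := (rtGraph_adj.mp z.2)
    rw [SimpleGraph.mem_neighborSet, rtGraph_adj]
    constructor
    · intro h0
      exact h.1 (by
        have : z.val = 0 := by
          have := congrArg (fun t => t - w) h0
          simpa using this.symm
        rw [this])
    · have : w - (z.val + w) = (0 : Fin n → ZMod q) - z.val := by abel
      unfold rtDist
      rw [this]
      exact h.2⟩
  left_inv y := Subtype.ext (by simp)
  right_inv z := Subtype.ext (by simp)

lemma nat_card_neighbor (q n : ℕ) [NeZero q] (D : Finset ℕ) (hD : D ⊆ Finset.Icc 1 n) :
    Nat.card ((rtGraph q n D).neighborSet 0) = ∑ d ∈ D, (q ^ d - q ^ (d - 1)) := by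
  have h0D : (0 : ℕ) ∉ D := by
    intro h
    have := hD h
    simp only [Finset.mem_Icc] at this
    omega
  have hset : (rtGraph q n D).neighborSet 0 = {y | rtWeight y ∈ D} := by
    ext y
    simp only [SimpleGraph.mem_neighborSet, Set.mem_setOf_eq, rtGraph_adj]
    have hd0 : rtDist (0 : Fin n → ZMod q) y = rtWeight y := by
      unfold rtDist
      rw [zero_sub, rtWeight_neg]
    constructor
    · rintro ⟨-, hd⟩
      rwa [hd0] at hd
    · intro h
      refine ⟨?_, by rwa [hd0]⟩
      intro h0
      rw [← h0, rtWeight_zero] at h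
      exact h0D h
  rw [hset]
  have h1 : Nat.card {y : Fin n → ZMod q | rtWeight y ∈ D}
      = Fintype.card {y : Fin n → ZMod q // rtWeight y ∈ D} := Nat.card_eq_fintype_card
  rw [h1, Fintype.card_subtype]
  exact card_weight_mem D hD

lemma sum_eq_imp_eq {q : ℕ} (hq : 2 ≤ q) {n m : ℕ} {D D₁ : Finset ℕ}
    (hD : D ⊆ Finset.Icc 1 n) (hD₁ : D₁ ⊆ Finset.Icc 1 m)
    (hsum : ∑ d ∈ D, (q ^ d - q ^ (d - 1)) = ∑ d ∈ D₁, (q ^ d - q ^ (d - 1))) :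
    D = D₁ := by
  have conv : ∀ (N : ℕ) (E : Finset ℕ), E ⊆ Finset.Icc 1 N →
      ∑ d ∈ E, (q ^ d - q ^ (d - 1)) = ∑ e ∈ E.image (· - 1), (q - 1) * q ^ e := by
    intro N E hE
    rw [Finset.sum_image]
    · apply Finset.sum_congr rfl
      intro d hd
      have hd1 : 1 ≤ d := (Finset.mem_Icc.mp (hE hd)).1
      have hpow : q ^ d = q * q ^ (d - 1) := by
        rw [← pow_succ']
        congr 1
        omega
      rw [hpow, Nat.sub_mul, one_mul]
    · intro a ha b hb hab
      have := (Finset.mem_Icc.mp (hE ha)).1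
      have := (Finset.mem_Icc.mp (hE hb)).1
      simp only at hab
      omega
  rw [conv n D hD, conv m D₁ hD₁] at hsum
  have himg : D.image (· - 1) = D₁.image (· - 1) := by
    apply digits_sum_inj hq (max n m + 1)
    · intro e he
      obtain ⟨d, hd, rfl⟩ := Finset.mem_image.mp he
      have := Finset.mem_Icc.mp (hD hd)
      simp only [Finset.mem_range]
      omega
    · intro e he
      obtain ⟨d, hd, rfl⟩ := Finset.mem_image.mp he
      have := Finset.mem_Icc.mp (hD₁ hd)
      simp only [Finset.mem_range]
      omega
    · exact hsum
  ext a
  constructor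
  · intro ha
    have ha1 : 1 ≤ a := (Finset.mem_Icc.mp (hD ha)).1
    have : a - 1 ∈ D₁.image (· - 1) := himg ▸ Finset.mem_image_of_mem _ ha
    obtain ⟨b, hb, hba⟩ := Finset.mem_image.mp this
    have hb1 : 1 ≤ b := (Finset.mem_Icc.mp (hD₁ hb)).1
    have : b = a := by omega
    exact this ▸ hb
  · intro ha
    have ha1 : 1 ≤ a := (Finset.mem_Icc.mp (hD₁ ha)).1
    have : a - 1 ∈ D.image (· - 1) := himg.symm ▸ Finset.mem_image_of_mem _ ha
    obtain ⟨b, hb, hba⟩ := Finset.mem_image.mp this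
    have hb1 : 1 ≤ b := (Finset.mem_Icc.mp (hD hb)).1
    have : b = a := by omega
    exact this ▸ hb

theorem rtGraph_component_iso_iff (q n m : ℕ) (hq : 2 ≤ q) (hn : 1 ≤ n) (hm : 1 ≤ m)
    (D D₁ : Finset ℕ) (hD : D ⊆ Finset.Icc 1 n) (hD₁ : D₁ ⊆ Finset.Icc 1 m)
    (hDne : D.Nonempty) (hD₁ne : D₁.Nonempty) :
    Nonempty
      (((rtGraph q n D).induce {y | (rtGraph q n D).Reachable 0 y}) ≃g
        ((rtGraph q m D₁).induce {y | (rtGraph q m D₁).Reachable 0 y})) ↔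
      D = D₁ := by
  haveI : NeZero q := ⟨by omega⟩
  constructor
  · rintro ⟨f⟩
    have h0n : (0 : Fin n → ZMod q) ∈ {y | (rtGraph q n D).Reachable 0 y} :=
      SimpleGraph.Reachable.refl 0
    set v0 : {y : Fin n → ZMod q | (rtGraph q n D).Reachable 0 y} := ⟨0, h0n⟩ with hv0
    have step1 : Nat.card ((rtGraph q n D).neighborSet 0)
        = Nat.card (((rtGraph q n D).induce
            {y | (rtGraph q n D).Reachable 0 y}).neighborSet v0) :=
      Nat.card_congr (neighborEquivOfReachable (rtGraph q n D) 0 v0).symm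
    have step2 : Nat.card (((rtGraph q n D).induce
          {y | (rtGraph q n D).Reachable 0 y}).neighborSet v0)
        = Nat.card (((rtGraph q m D₁).induce
            {y | (rtGraph q m D₁).Reachable 0 y}).neighborSet (f v0)) :=
      Nat.card_congr (f.mapNeighborSet v0)
    have step3 : Nat.card (((rtGraph q m D₁).induce
          {y | (rtGraph q m D₁).Reachable 0 y}).neighborSet (f v0))
        = Nat.card ((rtGraph q m D₁).neighborSet ↑(f v0)) :=
      Nat.card_congr (neighborEquivOfReachable (rtGraph q m D₁) 0 (f v0))
    have step4 : Nat.card ((rtGraph q m D₁).neighborSet ↑(f v0))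
        = Nat.card ((rtGraph q m D₁).neighborSet 0) :=
      Nat.card_congr (translateEquiv q m D₁ ↑(f v0))
    have hcard : Nat.card ((rtGraph q n D).neighborSet 0)
        = Nat.card ((rtGraph q m D₁).neighborSet 0) := by
      rw [step1, step2, step3, step4]
    rw [nat_card_neighbor q n D hD, nat_card_neighbor q m D₁ hD₁] at hcard
    exact sum_eq_imp_eq hq hD hD₁ hcard
  · intro h
    subst h
    have hkn : D.max' hDne ≤ n := by
      have := hD (D.max'_mem hDne); simp only [Finset.mem_Icc] at this; exact this.2
    have hkm : D.max' hD₁ne ≤ m := by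
      have := hD₁ (D.max'_mem hD₁ne); simp only [Finset.mem_Icc] at this; exact this.2
    exact ⟨(compIso hq hD hDne hkn).trans (compIso hq hD₁ hD₁ne hkm).symm⟩
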